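/- Let α, β, γ be finite subsets of ℤ² being the three axis-aligned projections of a finite set V ⊆ ℤ³ (α the projection forgetting the second coordinate, β forgetting the first, γ forgetting the third). Then |V| ≤ √(|α|·|β|·|γ|). -/

import Mathlib

open Finset

/-- Discrete Loomis–Whitney inequality: if `α, β, γ` are the three axis-aligned
projections of a finite set `V ⊆ ℤ³` (`α` forgetting the second coordinate,
`β` forgetting the first, `γ` forgetting the third), then
`|V| ≤ √(|α|·|β|·|γ|)`. -/
theorem stmt_5 (V : Finset (ℤ × ℤ × ℤ)) :
    let α := V.image (fun v => (v.1, v.2.2))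
    let β := V.image (fun v => (v.2.1, v.2.2))
    let γ := V.image (fun v => (v.1, v.2.1))
    (V.card : ℝ) ≤ Real.sqrt ((α.card : ℝ) * (β.card : ℝ) * (γ.card : ℝ)) := by
  intro α β γ
  -- fiber counts
  set F : ℤ × ℤ → ℕ := fun p => (V.filter (fun v => (v.1, v.2.1) = p)).card with hF
  have hcard : V.card = ∑ p ∈ γ, F p :=
    Finset.card_eq_sum_card_fiberwise (fun v hv => Finset.mem_image_of_mem _ hv)
  -- each fiber injects into a fiber of α and of β
  have hFa : ∀ p : ℤ × ℤ, F p ≤ (α.filter (fun q => q.1 = p.1)).card := by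
    intro p
    apply Finset.card_le_card_of_injOn (fun v => (v.1, v.2.2))
    · intro v hv
      simp only [Finset.mem_coe, Finset.mem_filter] at hv ⊢
      exact ⟨Finset.mem_image_of_mem _ hv.1, by simp [← hv.2]⟩
    · intro v hv w hw hvw
      simp only [Finset.coe_filter, Set.mem_setOf_eq] at hv hw
      simp only [Prod.mk.injEq] at hvw
      have h2 := hv.2.trans hw.2.symm
      simp only [Prod.mk.injEq] at h2
      exact Prod.ext hvw.1 (Prod.ext h2.2 hvw.2)
  have hFb : ∀ p : ℤ × ℤ, F p ≤ (β.filter (fun q => q.1 = p.2)).card := by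
    intro p
    apply Finset.card_le_card_of_injOn (fun v => (v.2.1, v.2.2))
    · intro v hv
      simp only [Finset.mem_coe, Finset.mem_filter] at hv ⊢
      exact ⟨Finset.mem_image_of_mem _ hv.1, by simp [← hv.2]⟩
    · intro v hv w hw hvw
      simp only [Finset.coe_filter, Set.mem_setOf_eq] at hv hw
      simp only [Prod.mk.injEq] at hvw
      have h2 := hv.2.trans hw.2.symm
      simp only [Prod.mk.injEq] at h2
      exact Prod.ext h2.1 (Prod.ext hvw.1 hvw.2)
  -- sum of products of fiber sizes over γ is at most |α| * |β|
  set g : ℤ → ℕ := fun a => (α.filter (fun q => q.1 = a)).card with hg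
  set h : ℤ → ℕ := fun b => (β.filter (fun q => q.1 = b)).card with hh
  have hsum2 : ∑ p ∈ γ, F p ^ 2 ≤ α.card * β.card := by
    calc ∑ p ∈ γ, F p ^ 2 ≤ ∑ p ∈ γ, g p.1 * h p.2 := by
          apply Finset.sum_le_sum
          intro p _
          rw [sq]
          exact Nat.mul_le_mul (hFa p) (hFb p)
      _ ≤ ∑ p ∈ (α.image Prod.fst) ×ˢ (β.image Prod.fst), g p.1 * h p.2 := by
          apply Finset.sum_le_sum_of_subset_of_nonneg
          · intro p hp
            simp only [γ, Finset.mem_image] at hp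
            obtain ⟨v, hv, rfl⟩ := hp
            refine Finset.mem_product.2 ⟨?_, ?_⟩
            · exact Finset.mem_image.2 ⟨(v.1, v.2.2), Finset.mem_image_of_mem _ hv, rfl⟩
            · exact Finset.mem_image.2 ⟨(v.2.1, v.2.2), Finset.mem_image_of_mem _ hv, rfl⟩
          · intros; exact Nat.zero_le _
      _ = (∑ a ∈ α.image Prod.fst, g a) * (∑ b ∈ β.image Prod.fst, h b) := by
          rw [Finset.sum_product, ← Finset.sum_mul_sum]
      _ = α.card * β.card := by
          congr 1
          · exact (Finset.card_eq_sum_card_fiberwise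
              (fun q hq => Finset.mem_image_of_mem _ hq)).symm
          · exact (Finset.card_eq_sum_card_fiberwise
              (fun q hq => Finset.mem_image_of_mem _ hq)).symm
  -- Cauchy–Schwarz
  have hCS : (V.card : ℤ) ^ 2 ≤ (γ.card : ℤ) * ∑ p ∈ γ, (F p : ℤ) ^ 2 := by
    have := sq_sum_le_card_mul_sum_sq (s := γ) (f := fun p => (F p : ℤ))
    calc (V.card : ℤ) ^ 2 = (∑ p ∈ γ, (F p : ℤ)) ^ 2 := by
          rw [hcard]; push_cast; ring
      _ ≤ _ := this
  have hkey : (V.card : ℤ) ^ 2 ≤ (α.card : ℤ) * β.card * γ.card := by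
    calc (V.card : ℤ) ^ 2 ≤ (γ.card : ℤ) * ∑ p ∈ γ, (F p : ℤ) ^ 2 := hCS
      _ ≤ (γ.card : ℤ) * ((α.card : ℤ) * β.card) := by
          apply mul_le_mul_of_nonneg_left _ (by positivity)
          have := hsum2
          calc ∑ p ∈ γ, (F p : ℤ) ^ 2 = ((∑ p ∈ γ, F p ^ 2 : ℕ) : ℤ) := by push_cast; ring
            _ ≤ ((α.card * β.card : ℕ) : ℤ) := by exact_mod_cast this
            _ = (α.card : ℤ) * β.card := by push_cast; ring
      _ = (α.card : ℤ) * β.card * γ.card := by ring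
  rw [show ((α.card : ℝ) * β.card * γ.card) = (((α.card * β.card * γ.card : ℕ) : ℝ)) by
    push_cast; ring]
  rw [Real.le_sqrt (by positivity)]
  swap
  · exact Nat.cast_nonneg _
  have : (V.card : ℤ) ^ 2 ≤ ((α.card * β.card * γ.card : ℕ) : ℤ) := by
    push_cast; exact hkey
  exact_mod_cast this
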